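/- Let H be a Hilbert space and T a bounded self-adjoint nonnegative operator on H with operator norm at most 1 such that Id - T is injective. For h ∈ H with Σ_{n≥0} ⟨h, Tⁿ h⟩ < ∞, the supremum over f ∈ H of ( ⟨h, f⟩ - (1/2) ⟨f, (Id - T) f⟩ ) equals (1/2) Σ_{n≥0} ⟨h, Tⁿ h⟩. -/

import Mathlib

open MeasureTheory Real
open scoped RealInnerProductSpace

theorem hilbert_rate_function_sum {H : Type*} [NormedAddCommGroup H]
    [InnerProductSpace ℝ H] [CompleteSpace H]
    (T : H →L[ℝ] H) (hTsa : IsSelfAdjoint T)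
    (hTpos : ∀ f : H, 0 ≤ ⟪f, T f⟫)
    (hTnorm : ‖T‖ ≤ 1)
    (hinj : Function.Injective (ContinuousLinearMap.id ℝ H - T))
    (h : H) (hsum : Summable fun n : ℕ => ⟪h, (T ^ n) h⟫) :
    IsLUB
      (Set.range fun f : H =>
        ⟪h, f⟫ - (1 / 2) * ⟪f, (ContinuousLinearMap.id ℝ H - T) f⟫)
      ((1 / 2) * ∑' n : ℕ, ⟪h, (T ^ n) h⟫) := by
  classical
  set S : H →L[ℝ] H := ContinuousLinearMap.id ℝ H - T with hS
  have hTsym : ∀ x y : H, ⟪T x, y⟫ = ⟪x, T y⟫ := fun x y =>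
    (ContinuousLinearMap.isSelfAdjoint_iff_isSymmetric.mp hTsa) x y
  have hpowsym : ∀ (n : ℕ) (x y : H), ⟪(T ^ n) x, y⟫ = ⟪x, (T ^ n) y⟫ := fun n x y =>
    (ContinuousLinearMap.isSelfAdjoint_iff_isSymmetric.mp (hTsa.pow n)) x y
  have hSsym : ∀ x y : H, ⟪S x, y⟫ = ⟪x, S y⟫ := by
    intro x y
    simp only [hS, ContinuousLinearMap.sub_apply, ContinuousLinearMap.id_apply,
      inner_sub_left, inner_sub_right, hTsym]
  have hSpos : ∀ f : H, 0 ≤ ⟪f, S f⟫ := by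
    intro f
    have h1 : ⟪f, T f⟫ ≤ ‖f‖ * ‖T f‖ := real_inner_le_norm f (T f)
    have h2 : ‖T f‖ ≤ ‖f‖ := by
      calc ‖T f‖ ≤ ‖T‖ * ‖f‖ := T.le_opNorm f
        _ ≤ 1 * ‖f‖ := by gcongr
        _ = ‖f‖ := one_mul _
    have h3 : ⟪f, S f⟫ = ⟪f, f⟫ - ⟪f, T f⟫ := by
      simp [hS, ContinuousLinearMap.sub_apply, inner_sub_right]
    have h4 : ⟪f, f⟫ = ‖f‖ * ‖f‖ := real_inner_self_eq_norm_mul_norm f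
    nlinarith [norm_nonneg f]
  -- each term is nonnegative
  have hterm : ∀ n : ℕ, 0 ≤ ⟪h, (T ^ n) h⟫ := by
    intro n
    rcases Nat.even_or_odd n with ⟨m, hm⟩ | ⟨m, hm⟩
    · subst hm
      have e : (T ^ (m + m)) h = (T ^ m) ((T ^ m) h) := by
        rw [pow_add]; rfl
      rw [e, ← hpowsym m]
      exact real_inner_self_nonneg
    · subst hm
      have e : (T ^ (2 * m + 1)) h = (T ^ m) (T ((T ^ m) h)) := by
        have e2 : 2 * m + 1 = m + (m + 1) := by omega
        rw [e2, pow_add, pow_succ']; rfl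
      rw [e, ← hpowsym m]
      exact hTpos _
  set a : ℕ → ℝ := fun N => ∑ n ∈ Finset.range N, ⟪h, (T ^ n) h⟫ with ha
  set L : ℝ := ∑' n : ℕ, ⟪h, (T ^ n) h⟫ with hLdef
  have hL : Filter.Tendsto a Filter.atTop (nhds L) := hsum.hasSum.tendsto_sum_nat
  have haL : ∀ N, a N ≤ L := fun N => Summable.sum_le_tsum _ (fun i _ => hterm i) hsum
  have hmono : Monotone a := fun i j hij =>
    Finset.sum_le_sum_of_subset_of_nonneg (Finset.range_subset_range.2 hij)
      (fun k _ _ => hterm k)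
  set g : ℕ → H := fun N => ∑ n ∈ Finset.range N, (T ^ n) h with hg
  have hgeo : ∀ N : ℕ, S (g N) = h - (T ^ N) h := by
    intro N
    induction N with
    | zero => simp [hg]
    | succ N ih =>
      have : g (N + 1) = g N + (T ^ N) h := by
        simp [hg, Finset.sum_range_succ]
      rw [this, map_add, ih]
      have e : S ((T ^ N) h) = (T ^ N) h - (T ^ (N + 1)) h := by
        simp [hS, ContinuousLinearMap.sub_apply, pow_succ']
      rw [e]; abel
  -- inner products with g N
  have hhg : ∀ N, ⟪h, g N⟫ = a N := by
    intro N
    simp [hg, ha, inner_sum]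
  have hgh : ∀ N, ⟪g N, h⟫ = a N := by
    intro N; rw [real_inner_comm]; exact hhg N
  have hgT : ∀ N, ⟪g N, (T ^ N) h⟫ = a (2 * N) - a N := by
    intro N
    have e1 : ⟪g N, (T ^ N) h⟫ = ∑ n ∈ Finset.range N, ⟪h, (T ^ (N + n)) h⟫ := by
      rw [hg, sum_inner]
      refine Finset.sum_congr rfl fun n _ => ?_
      rw [hpowsym n, ← ContinuousLinearMap.mul_apply, ← pow_add, add_comm n N]
    have e2 : a (2 * N) - a N = ∑ n ∈ Finset.Ico N (2 * N), ⟪h, (T ^ n) h⟫ := by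
      rw [ha]
      rw [Finset.sum_Ico_eq_sub _ (by omega : N ≤ 2 * N)]
    rw [e1, e2, Finset.sum_Ico_eq_sum_range]
    simp [show 2 * N - N = N from by omega]
  have hgSg : ∀ N, ⟪g N, S (g N)⟫ = 2 * a N - a (2 * N) := by
    intro N
    rw [hgeo N, inner_sub_right, hgh N, hgT N]
    ring
  -- norm of T^N h tends to 0
  have ht0 : Filter.Tendsto (fun n : ℕ => ⟪h, (T ^ n) h⟫) Filter.atTop (nhds 0) :=
    hsum.tendsto_atTop_zero
  have htwo : Filter.Tendsto (fun N : ℕ => 2 * N) Filter.atTop Filter.atTop :=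
    Filter.tendsto_atTop_atTop.mpr (fun b => ⟨b, fun a ha => by omega⟩)
  have hsqeq : ∀ N : ℕ, ‖(T ^ N) h‖ = Real.sqrt ⟪h, (T ^ (2 * N)) h⟫ := by
    intro N
    have e : (T ^ (2 * N)) h = (T ^ N) ((T ^ N) h) := by
      rw [two_mul, pow_add]; rfl
    rw [e, ← hpowsym N, real_inner_self_eq_norm_sq, Real.sqrt_sq (norm_nonneg _)]
  have hnorm : Filter.Tendsto (fun N : ℕ => ‖(T ^ N) h‖) Filter.atTop (nhds 0) := by
    have : Filter.Tendsto (fun N : ℕ => Real.sqrt ⟪h, (T ^ (2 * N)) h⟫)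
        Filter.atTop (nhds 0) := by
      have := (Real.continuous_sqrt.tendsto 0).comp (ht0.comp htwo)
      simpa [Function.comp_def] using this
    rw [funext hsqeq]; exact this
  -- key upper bound inequality
  have key : ∀ (f : H) (N : ℕ),
      ⟪h, f⟫ - (1 / 2) * ⟪f, S f⟫ ≤ (1 / 2) * L + ‖(T ^ N) h‖ * ‖f‖ := by
    intro f N
    have e1 : ⟪g N, S f⟫ = ⟪h, f⟫ - ⟪(T ^ N) h, f⟫ := by
      rw [← hSsym, hgeo, inner_sub_left]
    have e0 := hSpos (g N - f)
    rw [map_sub, inner_sub_left, inner_sub_right, inner_sub_right] at e0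
    have ecomm : ⟪f, S (g N)⟫ = ⟪g N, S f⟫ := by
      rw [← hSsym, real_inner_comm]
    have e2 : 2 * ⟪g N, S f⟫ ≤ ⟪g N, S (g N)⟫ + ⟪f, S f⟫ := by linarith
    have e3 : ⟪g N, S (g N)⟫ ≤ L := by
      rw [hgSg]
      have := hmono (by omega : N ≤ 2 * N)
      have := haL N
      linarith
    have e4 : ⟪(T ^ N) h, f⟫ ≤ ‖(T ^ N) h‖ * ‖f‖ := real_inner_le_norm _ _
    linarith
  constructor
  · rintro x ⟨f, rfl⟩
    have hlim : Filter.Tendsto (fun N : ℕ => (1 / 2) * L + ‖(T ^ N) h‖ * ‖f‖)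
        Filter.atTop (nhds ((1 / 2) * L)) := by
      have h1 : Filter.Tendsto (fun N : ℕ => ‖(T ^ N) h‖ * ‖f‖)
          Filter.atTop (nhds 0) := by simpa using hnorm.mul_const ‖f‖
      have h2 := (tendsto_const_nhds :
        Filter.Tendsto (fun _ : ℕ => (1 / 2) * L) Filter.atTop
          (nhds ((1 / 2) * L))).add h1
      simpa using h2
    exact ge_of_tendsto' hlim (fun N => key f N)
  · intro b hb
    have hvals : ∀ N : ℕ, (1 / 2) * a (2 * N) ≤ b := by
      intro N
      have : ⟪h, g N⟫ - (1 / 2) * ⟪g N, S (g N)⟫ = (1 / 2) * a (2 * N) := by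
        rw [hhg, hgSg]; ring
      have hmem : (1 / 2) * a (2 * N) ∈
          Set.range fun f : H => ⟪h, f⟫ - (1 / 2) * ⟪f, S f⟫ := ⟨g N, this⟩
      exact hb hmem
    have hlim : Filter.Tendsto (fun N : ℕ => (1 / 2) * a (2 * N))
        Filter.atTop (nhds ((1 / 2) * L)) :=
      (hL.comp htwo).const_mul (1 / 2)
    exact le_of_tendsto' hlim hvals
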